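/- Let K1, K2, K3 : ℕ → ℝ with Ki(n) > 0 for all i ∈ {1,2,3} and all n, and let (a_n) be the paper's auxiliary sequence a associated with K1, K2, K3. Then for every n ≥ 2, a_{n+1} > (∏_{i=2}^{n} K3(i)) · { a_2 + (a_2 − K3(1)·a_1) · Σ_{i=2}^{n} ∏_{k=2}^{i} (k − 1 + K1(k−1) + K2(k−1))/K3(k−1) }. -/

import Mathlib

open Finset

/-- Inequality (A7) of the paper: for positive rates, for every `n ≥ 2`,
`a_{n+1} > (∏_{i=2}^n K3(i))·{a_2 + (a_2 − K3(1)a_1)·Σ_{i=2}^n ∏_{k=2}^i (k−1+K1(k−1)+K2(k−1))/K3(k−1)}`. -/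
theorem aux_a_lower_bound (K1 K2 K3 a : ℕ → ℝ)
    (hK1 : ∀ n : ℕ, 0 < K1 n) (hK2 : ∀ n : ℕ, 0 < K2 n) (hK3 : ∀ n : ℕ, 0 < K3 n)
    (ha1 : a 1 = K3 0)
    (haRec : ∀ n : ℕ, 2 ≤ n →
      a n = K3 (n - 1) * a (n - 1)
        + K3 (n - 1) * ∑ i ∈ Finset.Icc 1 (n - 2), K2 i * a i *
            ∏ j ∈ Finset.Icc (i + 1) (n - 2), ((j : ℝ) + K1 j + K2 j)
        + K3 (n - 1) * K2 0 * ∏ i ∈ Finset.Icc 1 (n - 2), ((i : ℝ) + K1 i + K2 i)) :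
    ∀ n : ℕ, 2 ≤ n →
      (∏ i ∈ Finset.Icc 2 n, K3 i) *
        (a 2 + (a 2 - K3 1 * a 1) * ∑ i ∈ Finset.Icc 2 n,
          ∏ k ∈ Finset.Icc 2 i, (((k : ℝ) - 1 + K1 (k - 1) + K2 (k - 1)) / K3 (k - 1)))
      < a (n + 1) := by
  have hcpos : ∀ j : ℕ, 0 < (j : ℝ) + K1 j + K2 j := by
    intro j
    have h1 := hK1 j; have h2 := hK2 j
    have hj : (0:ℝ) ≤ (j:ℝ) := Nat.cast_nonneg j
    linarith
  -- positivity of a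
  have hapos : ∀ n : ℕ, 1 ≤ n → 0 < a n := by
    intro n
    induction n using Nat.strong_induction_on with
    | _ n ih =>
      intro hn
      rcases eq_or_lt_of_le hn with h | h
      · rw [← h, ha1]; exact hK3 0
      · have h2 : 2 ≤ n := h
        rw [haRec n h2]
        have hsum : 0 ≤ ∑ i ∈ Finset.Icc 1 (n - 2), K2 i * a i *
            ∏ j ∈ Finset.Icc (i + 1) (n - 2), ((j : ℝ) + K1 j + K2 j) := by
          apply Finset.sum_nonneg
          intro i hi
          obtain ⟨hi1, hi2⟩ := Finset.mem_Icc.mp hi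
          have hai : 0 < a i := ih i (by omega) hi1
          have hp : 0 < ∏ j ∈ Finset.Icc (i + 1) (n - 2), ((j : ℝ) + K1 j + K2 j) :=
            Finset.prod_pos fun j _ => hcpos j
          exact (mul_pos (mul_pos (hK2 i) hai) hp).le
        have h1 : 0 < K3 (n-1) * a (n-1) := mul_pos (hK3 _) (ih (n-1) (by omega) (by omega))
        have h2' : 0 ≤ K3 (n-1) * ∑ i ∈ Finset.Icc 1 (n - 2), K2 i * a i *
            ∏ j ∈ Finset.Icc (i + 1) (n - 2), ((j : ℝ) + K1 j + K2 j) :=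
          mul_nonneg (hK3 _).le hsum
        have h3 : 0 < K3 (n-1) * K2 0 * ∏ i ∈ Finset.Icc 1 (n - 2), ((i : ℝ) + K1 i + K2 i) :=
          mul_pos (mul_pos (hK3 _) (hK2 0)) (Finset.prod_pos fun i _ => hcpos i)
        linarith
  -- one-step recurrence for d_n = a (n+1) - K3 n * a n, multiplied through by K3 (m+1)
  have hstep : ∀ m : ℕ, K3 (m+1) * (a (m+3) - K3 (m+2) * a (m+2)) =
      K3 (m+2) * ((m+1 : ℝ) + K1 (m+1) + K2 (m+1)) * (a (m+2) - K3 (m+1) * a (m+1))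
      + K3 (m+1) * (K3 (m+2) * K2 (m+1) * a (m+1)) := by
    intro m
    have eq2 := haRec (m+2) (by omega)
    have eq3 := haRec (m+3) (by omega)
    simp only [show m+2-1 = m+1 from by omega, show m+2-2 = m from by omega,
      show m+3-1 = m+2 from by omega, show m+3-2 = m+1 from by omega] at eq2 eq3
    -- sum identity
    have hsplit : ∀ i ∈ Finset.Icc 1 m, K2 i * a i *
          ∏ j ∈ Finset.Icc (i + 1) (m+1), ((j : ℝ) + K1 j + K2 j)
        = ((m+1 : ℝ) + K1 (m+1) + K2 (m+1)) * (K2 i * a i *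
          ∏ j ∈ Finset.Icc (i + 1) m, ((j : ℝ) + K1 j + K2 j)) := by
      intro i hi
      obtain ⟨hi1, hi2⟩ := Finset.mem_Icc.mp hi
      rw [Finset.prod_Icc_succ_top (by omega : i + 1 ≤ m + 1) _]
      push_cast
      ring
    have hsum3 : ∑ i ∈ Finset.Icc 1 (m+1), K2 i * a i *
            ∏ j ∈ Finset.Icc (i + 1) (m+1), ((j : ℝ) + K1 j + K2 j)
        = ((m+1 : ℝ) + K1 (m+1) + K2 (m+1)) *
            ∑ i ∈ Finset.Icc 1 m, K2 i * a i *
              ∏ j ∈ Finset.Icc (i + 1) m, ((j : ℝ) + K1 j + K2 j)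
          + K2 (m+1) * a (m+1) := by
      rw [Finset.sum_Icc_succ_top (by omega : 1 ≤ m + 1) _,
        Finset.sum_congr rfl hsplit, ← Finset.mul_sum,
        show Finset.Icc (m+1+1) (m+1) = ∅ from Finset.Icc_eq_empty (by omega),
        Finset.prod_empty]
      ring
    have hprod3 : ∏ i ∈ Finset.Icc 1 (m+1), ((i : ℝ) + K1 i + K2 i)
        = ((m+1 : ℝ) + K1 (m+1) + K2 (m+1)) * ∏ i ∈ Finset.Icc 1 m, ((i : ℝ) + K1 i + K2 i) := by
      rw [Finset.prod_Icc_succ_top (by omega : 1 ≤ m + 1) _]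
      push_cast; ring
    rw [hsum3, hprod3] at eq3
    linear_combination K3 (m+1) * eq3 - K3 (m+2) * ((m:ℝ) + 1 + K1 (m+1) + K2 (m+1)) * eq2
  -- lower bound on d_n
  have hd : ∀ n : ℕ, 1 ≤ n →
      (a 2 - K3 1 * a 1) * (∏ i ∈ Finset.Icc 2 n, K3 i) *
        (∏ k ∈ Finset.Icc 2 n, (((k : ℝ) - 1 + K1 (k - 1) + K2 (k - 1)) / K3 (k - 1)))
      ≤ a (n+1) - K3 n * a n ∧ (2 ≤ n →
      (a 2 - K3 1 * a 1) * (∏ i ∈ Finset.Icc 2 n, K3 i) *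
        (∏ k ∈ Finset.Icc 2 n, (((k : ℝ) - 1 + K1 (k - 1) + K2 (k - 1)) / K3 (k - 1)))
      < a (n+1) - K3 n * a n) := by
    intro n hn
    induction n, hn using Nat.le_induction with
    | base =>
      constructor
      · rw [show Finset.Icc 2 1 = ∅ from Finset.Icc_eq_empty (by omega)]
        simp
      · omega
    | succ n hn ih =>
      obtain ⟨m, rfl⟩ : ∃ m, n = m + 1 := ⟨n - 1, by omega⟩
      simp only [show m+1+1 = m+2 from rfl] at ih ⊢
      have hQ : ∏ i ∈ Finset.Icc 2 (m+2), K3 i = (∏ i ∈ Finset.Icc 2 (m+1), K3 i) * K3 (m+2) :=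
        Finset.prod_Icc_succ_top (by omega) _
      have hR : ∏ k ∈ Finset.Icc 2 (m+2), (((k : ℝ) - 1 + K1 (k - 1) + K2 (k - 1)) / K3 (k - 1))
          = (∏ k ∈ Finset.Icc 2 (m+1), (((k : ℝ) - 1 + K1 (k - 1) + K2 (k - 1)) / K3 (k - 1)))
            * (((m+1 : ℝ) + K1 (m+1) + K2 (m+1)) / K3 (m+1)) := by
        rw [Finset.prod_Icc_succ_top (by omega : 2 ≤ m + 1 + 1) _,
          show m+1+1-1 = m+1 from by omega]
        push_cast; ring
      set D := a 2 - K3 1 * a 1 with hD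
      set Q := ∏ i ∈ Finset.Icc 2 (m+1), K3 i with hQ1
      set R := ∏ k ∈ Finset.Icc 2 (m+1), (((k : ℝ) - 1 + K1 (k - 1) + K2 (k - 1)) / K3 (k - 1)) with hR1
      set c := ((m+1 : ℝ) + K1 (m+1) + K2 (m+1)) with hc
      have hcpos' : 0 < c := by rw [hc]; have h := hcpos (m+1); push_cast at h; exact h
      have key : K3 (m+2) * c * (D * Q * R) ≤ K3 (m+2) * c * (a (m+2) - K3 (m+1) * a (m+1)) :=
        mul_le_mul_of_nonneg_left ih.1 (mul_pos (hK3 (m+2)) hcpos').le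
      have hposterm : 0 < K3 (m+1) * (K3 (m+2) * K2 (m+1) * a (m+1)) :=
        mul_pos (hK3 (m+1)) (mul_pos (mul_pos (hK3 (m+2)) (hK2 (m+1))) (hapos (m+1) (by omega)))
      have hs := hstep m
      rw [← hc] at hs
      have hK3ne : K3 (m+1) ≠ 0 := (hK3 (m+1)).ne'
      have hstrict : D * (Q * K3 (m+2)) * (R * (c / K3 (m+1))) < a (m+3) - K3 (m+2) * a (m+2) := by
        rw [← mul_lt_mul_iff_right₀ (hK3 (m+1))]
        have hexp : K3 (m+1) * (D * (Q * K3 (m+2)) * (R * (c / K3 (m+1))))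
            = K3 (m+2) * c * (D * Q * R) := by
          field_simp
        rw [hexp]
        linarith
      constructor
      · rw [hQ, hR]; exact hstrict.le
      · intro _; rw [hQ, hR]; exact hstrict
  -- main induction
  intro n hn
  induction n, hn using Nat.le_induction with
  | base =>
    have h2 := (hd 2 (by omega)).2 (by omega)
    simp only [Finset.Icc_self, Finset.sum_singleton, Finset.prod_singleton] at h2 ⊢
    norm_num at h2 ⊢
    nlinarith [h2]
  | succ n hn ih =>
    have hQ : ∏ i ∈ Finset.Icc 2 (n+1), K3 i = (∏ i ∈ Finset.Icc 2 n, K3 i) * K3 (n+1) :=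
      Finset.prod_Icc_succ_top (by omega) _
    have hS : ∑ i ∈ Finset.Icc 2 (n+1), ∏ k ∈ Finset.Icc 2 i,
          (((k : ℝ) - 1 + K1 (k - 1) + K2 (k - 1)) / K3 (k - 1))
        = (∑ i ∈ Finset.Icc 2 n, ∏ k ∈ Finset.Icc 2 i,
            (((k : ℝ) - 1 + K1 (k - 1) + K2 (k - 1)) / K3 (k - 1)))
          + ∏ k ∈ Finset.Icc 2 (n+1), (((k : ℝ) - 1 + K1 (k - 1) + K2 (k - 1)) / K3 (k - 1)) :=
      Finset.sum_Icc_succ_top (by omega) _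
    have hdle := (hd (n+1) (by omega)).1
    rw [hQ] at hdle
    have h1 : K3 (n+1) * ((∏ i ∈ Finset.Icc 2 n, K3 i) *
        (a 2 + (a 2 - K3 1 * a 1) * ∑ i ∈ Finset.Icc 2 n, ∏ k ∈ Finset.Icc 2 i,
          (((k : ℝ) - 1 + K1 (k - 1) + K2 (k - 1)) / K3 (k - 1))))
        < K3 (n+1) * a (n+1) :=
      (mul_lt_mul_iff_right₀ (hK3 (n+1))).mpr ih
    rw [hQ, hS]
    have expand : ((∏ i ∈ Finset.Icc 2 n, K3 i) * K3 (n+1)) *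
        (a 2 + (a 2 - K3 1 * a 1) * ((∑ i ∈ Finset.Icc 2 n, ∏ k ∈ Finset.Icc 2 i,
            (((k : ℝ) - 1 + K1 (k - 1) + K2 (k - 1)) / K3 (k - 1)))
          + ∏ k ∈ Finset.Icc 2 (n+1), (((k : ℝ) - 1 + K1 (k - 1) + K2 (k - 1)) / K3 (k - 1))))
        = K3 (n+1) * ((∏ i ∈ Finset.Icc 2 n, K3 i) *
            (a 2 + (a 2 - K3 1 * a 1) * ∑ i ∈ Finset.Icc 2 n, ∏ k ∈ Finset.Icc 2 i,
              (((k : ℝ) - 1 + K1 (k - 1) + K2 (k - 1)) / K3 (k - 1))))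
          + (a 2 - K3 1 * a 1) * ((∏ i ∈ Finset.Icc 2 n, K3 i) * K3 (n+1)) *
            ∏ k ∈ Finset.Icc 2 (n+1), (((k : ℝ) - 1 + K1 (k - 1) + K2 (k - 1)) / K3 (k - 1)) := by
      ring
    linarith [h1, hdle, expand]
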